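/- Define the defect A_k(C₀; C₁,…,C_k) = C₀ ⋄ Sym_k(C₁,…,C_k) − Sym_{k+1}(C₀,…,C_k). Then the cyclic-type sum A_k(C₀; C₁,…,C_k) + A_k(C₁; C₀,C₂,…,C_k) + ⋯ + A_k(C_k; C₁,…,C_{k−1},C₀) vanishes. -/

import Mathlib

/-- Commutator in an associative ring. -/
def brk {A : Type*} [Ring A] (a b : A) : A := a * b - b * a

/-- Symmetrized product of two elements. -/
def dia {A : Type*} [Ring A] [Algebra ℚ A] (a b : A) : A := (2⁻¹ : ℚ) • (a * b + b * a)

/-- Fully symmetrized product of a list of elements: the average of the products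
over all orderings of the list. -/
def symP {A : Type*} [Ring A] [Algebra ℚ A] (L : List A) : A :=
  ((L.length.factorial : ℚ)⁻¹) • ((L.permutations.map List.prod).sum)

/-- The defect `A_k(C₀; C₁,…,C_k) = C₀ ⋄ Sym_k(C₁,…,C_k) − Sym_{k+1}(C₀,C₁,…,C_k)`. -/
def Adef {A : Type*} [Ring A] [Algebra ℚ A] (c₀ : A) (Cs : List A) : A :=
  dia c₀ (symP Cs) - symP (c₀ :: Cs)

open List

namespace Stmt6Aux

variable {α : Type*}

lemma permAux_append (a b : α) (s : List α) :
    permutations'Aux a (s ++ [b]) =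
      (permutations'Aux a s).map (· ++ [b]) ++ [s ++ [b, a]] := by
  induction s with
  | nil => simp
  | cons c s ih =>
      show (a :: (c :: (s ++ [b]))) :: (permutations'Aux a (s ++ [b])).map (cons c) = _
      rw [ih]
      simp [Function.comp_def]

lemma permAux_reverse (a : α) (s : List α) :
    ((permutations'Aux a s.reverse : List (List α)) : Multiset (List α)) =
      Multiset.map List.reverse (permutations'Aux a s) := by
  induction s with
  | nil => simp
  | cons b s ih =>
      rw [show (b :: s).reverse = s.reverse ++ [b] by simp, permAux_append,
        show (permutations'Aux a (b :: s)) = (a :: b :: s) :: (permutations'Aux a s).map (cons b)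
          from rfl]
      simp only [← Multiset.coe_add, ← Multiset.cons_coe, Multiset.map_cons, Multiset.map_coe,
        ih, Multiset.map_map]
      rw [show ((a :: b :: s).reverse) = s.reverse ++ [b, a] by simp]
      rw [add_comm, ← Multiset.map_coe, ih, Multiset.map_map]
      simp [Function.comp_def, ← Multiset.cons_coe, ← Multiset.singleton_add]

lemma bind_finsum {ι β : Type*} (s : Finset ι) (M : ι → Multiset α) (f : α → Multiset β) :
    (∑ j ∈ s, M j).bind f = ∑ j ∈ s, (M j).bind f := by
  classical
  induction s using Finset.induction_on with
  | empty => simp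
  | insert _ _ h ih => rw [Finset.sum_insert h, Finset.sum_insert h, Multiset.add_bind, ih]

lemma map_finsum {ι β : Type*} (s : Finset ι) (M : ι → Multiset α) (f : α → β) :
    Multiset.map f (∑ j ∈ s, M j) = ∑ j ∈ s, Multiset.map f (M j) := by
  classical
  induction s using Finset.induction_on with
  | empty => simp
  | insert _ _ h ih => rw [Finset.sum_insert h, Finset.sum_insert h, Multiset.map_add, ih]

/-- head-grouping of permutations -/
lemma perms'_key : ∀ (L : List α), L ≠ [] →
    ((L.permutations' : List (List α)) : Multiset (List α)) =
      ∑ i : Fin L.length,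
        Multiset.map (L.get i :: ·) ((L.eraseIdx i).permutations' : Multiset (List α)) := by
  intro L
  induction L with
  | nil => intro h; exact absurd rfl h
  | cons a l ih =>
      intro _
      rcases eq_or_ne l [] with rfl | hl
      · simp
      have hco : ∀ (m : List α), ((a :: m).permutations' : Multiset (List α)) =
          Multiset.bind ↑m.permutations' (fun t => ↑(permutations'Aux a t)) := by
        intro m
        rw [show (a :: m).permutations' = m.permutations'.flatMap (permutations'Aux a) from rfl,
          Multiset.coe_bind]
      rw [hco, ih hl, bind_finsum]
      simp only [length_cons]
      rw [Fin.sum_univ_succ]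
      have hterm : ∀ j : Fin l.length,
          (Multiset.map (l.get j :: ·) ((l.eraseIdx j).permutations' : Multiset (List α))).bind
              (fun t => ↑(permutations'Aux a t)) =
            Multiset.map ((a :: l.get j :: ·) : List α → List α)
                ((l.eraseIdx j).permutations' : Multiset (List α)) +
              Multiset.map (l.get j :: ·) (((a :: l.eraseIdx j).permutations' :
                Multiset (List α))) := by
        intro j
        rw [Multiset.bind_map, hco]
        have : ∀ t : List α, ((permutations'Aux a (l.get j :: t) : List (List α)) :
            Multiset (List α)) =
            {a :: l.get j :: t} + Multiset.map (l.get j :: ·) ↑(permutations'Aux a t) := by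
          intro t
          show ((((a :: l.get j :: t) :: (permutations'Aux a t).map (l.get j :: ·)) :
            List (List α)) : Multiset (List α)) = _
          rw [← Multiset.cons_coe, ← Multiset.singleton_add, Multiset.map_coe]
        rw [Multiset.bind_congr (fun t _ => this t), Multiset.bind_add, Multiset.bind_singleton,
          Multiset.map_bind]
      rw [Finset.sum_congr rfl (fun j _ => hterm j), Finset.sum_add_distrib]
      congr 1
      · have hmm : ∀ (c : α) (P : Multiset (List α)),
            Multiset.map (fun t => a :: c :: t) P =
              Multiset.map (a :: ·) (Multiset.map (c :: ·) P) := by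
          intro c P; rw [Multiset.map_map]; rfl
        rw [Finset.sum_congr rfl (fun j _ => hmm _ _), ← map_finsum, ← ih hl]
        rfl

lemma perms'_reverse (L : List α) :
    Multiset.map List.reverse ((L.permutations' : List (List α)) : Multiset (List α)) =
      ((L.permutations' : List (List α)) : Multiset (List α)) := by
  induction L with
  | nil => simp
  | cons a l ih =>
      rw [show (a :: l).permutations' = l.permutations'.flatMap (permutations'Aux a) from rfl,
        ← Multiset.coe_bind, Multiset.map_bind]
      have h1 : ∀ t : List α, Multiset.map List.reverse
          ((permutations'Aux a t : List (List α)) : Multiset (List α)) =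
          ((permutations'Aux a t.reverse : List (List α)) : Multiset (List α)) :=
        fun t => (permAux_reverse a t).symm
      rw [Multiset.bind_congr (fun t _ => h1 t)]
      have h2 : (Multiset.map List.reverse
            ((l.permutations' : List (List α)) : Multiset (List α))).bind
            (fun t => ((permutations'Aux a t : List (List α)) : Multiset (List α))) =
          ((l.permutations' : List (List α)) : Multiset (List α)).bind
            (fun t => ((permutations'Aux a t.reverse : List (List α)) : Multiset (List α))) := by
        rw [Multiset.bind_map]
      rw [← h2, ih, Multiset.coe_bind]

lemma perm_cons_eraseIdx : ∀ (L : List α) (i : ℕ), ∀ h : i < L.length,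
    (L.get ⟨i, h⟩ :: L.eraseIdx i) ~ L := by
  intro L
  induction L with
  | nil => intro i h; simp at h
  | cons a l ih =>
      intro i h
      match i with
      | 0 => exact Perm.refl _
      | (j+1) =>
          have hj : j < l.length := by simpa using h
          show (l.get ⟨j, hj⟩ :: a :: l.eraseIdx j) ~ a :: l
          exact (Perm.swap a _ _).trans ((ih j hj).cons a)

lemma sum_finsum {ι M : Type*} [AddCommMonoid M] (s : Finset ι) (f : ι → Multiset M) :
    (∑ j ∈ s, f j).sum = ∑ j ∈ s, (f j).sum := by
  classical
  induction s using Finset.induction_on with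
  | empty => simp
  | insert _ _ h ih => rw [Finset.sum_insert h, Finset.sum_insert h, Multiset.sum_add, ih]

section Alg

variable {A : Type*} [Ring A] [Algebra ℚ A]

/-- Sum of products over all permutations. -/
noncomputable def msum (L : List A) : A :=
  (Multiset.map List.prod ((L.permutations' : List (List A)) : Multiset (List A))).sum

lemma symP_eq_msum (L : List A) :
    symP L = ((L.length.factorial : ℚ)⁻¹) • msum L := by
  unfold symP msum
  congr 1
  rw [← Multiset.sum_coe, ← Multiset.map_coe,
    Multiset.coe_eq_coe.mpr (List.permutations_perm_permutations' L)]

lemma msum_left (L : List A) (hL : L ≠ []) :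
    msum L = ∑ i : Fin L.length, L.get i * msum (L.eraseIdx i) := by
  unfold msum
  rw [perms'_key L hL, map_finsum, sum_finsum]
  apply Finset.sum_congr rfl
  intro i _
  rw [Multiset.map_map]
  have : (List.prod ∘ fun x => L.get i :: x) = fun t : List A => L.get i * t.prod := by
    funext t; simp
  rw [this, Multiset.sum_map_mul_left]

lemma msum_right (L : List A) (hL : L ≠ []) :
    msum L = ∑ i : Fin L.length, msum (L.eraseIdx i) * L.get i := by
  conv_lhs => rw [msum, ← perms'_reverse L, perms'_key L hL, map_finsum, map_finsum]
  rw [sum_finsum]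
  apply Finset.sum_congr rfl
  intro i _
  rw [Multiset.map_map, Multiset.map_map]
  have : ((List.prod ∘ List.reverse) ∘ fun x => L.get i :: x) =
      fun t : List A => (List.prod ∘ List.reverse) t * L.get i := by
    funext t; simp
  rw [this, Multiset.sum_map_mul_right]
  congr 1
  conv_rhs => rw [msum, ← perms'_reverse (L.eraseIdx ↑i), Multiset.map_map]

lemma symP_congr {L L' : List A} (h : L ~ L') : symP L = symP L' := by
  unfold symP
  rw [h.length_eq, ((h.permutations).map List.prod).sum_eq]

end Alg

end Stmt6Aux

open Stmt6Aux

theorem stmt6 {A : Type*} [Ring A] [Algebra ℚ A] {k : ℕ} (C : Fin (k + 1) → A) :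
    ∑ i : Fin (k + 1),
        Adef (C i) (List.ofFn fun j : Fin k => Function.update C i (C 0) j.succ) = 0 := by
  classical
  set L : List A := List.ofFn C with hLdef
  have hlen : L.length = k + 1 := List.length_ofFn (f := C)
  have hLne : L ≠ [] := by
    intro h
    rw [h] at hlen
    simp at hlen
  set R : Fin (k+1) → List A :=
    fun i => List.ofFn fun j : Fin k => Function.update C i (C 0) j.succ with hRdef
  have hconsR : ∀ i : Fin (k+1),
      (C i :: R i) = List.ofFn (C ∘ (Equiv.swap (0 : Fin (k+1)) i)) := by
    intro i
    have htail : R i =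
        List.ofFn (fun j : Fin k => (C ∘ ⇑(Equiv.swap (0 : Fin (k+1)) i)) j.succ) := by
      show List.ofFn (fun j : Fin k => Function.update C i (C 0) j.succ) = _
      congr 1
      funext j
      simp only [Function.comp_apply, Function.update_apply]
      by_cases h : j.succ = i
      · simp [h]
      · rw [if_neg h, Equiv.swap_apply_of_ne_of_ne (Fin.succ_ne_zero j) h]
    rw [htail, List.ofFn_succ (f := C ∘ ⇑(Equiv.swap (0 : Fin (k+1)) i))]
    simp
  have hperm1 : ∀ i : Fin (k+1), (C i :: R i) ~ L := by
    intro i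
    rw [hconsR i]
    exact Equiv.Perm.ofFn_comp_perm _ C
  have hilt : ∀ i : Fin (k+1), (i : ℕ) < L.length := fun i => by rw [hlen]; exact i.isLt
  have hget : ∀ i : Fin (k+1), L.get ⟨(i : ℕ), hilt i⟩ = C i := by
    intro i
    show (List.ofFn C).get ⟨(i : ℕ), hilt i⟩ = C i
    rw [List.get_ofFn]
    exact congrArg C (by ext; simp)
  have hperm2 : ∀ i : Fin (k+1), R i ~ L.eraseIdx (i : ℕ) := by
    intro i
    have h3 : (C i :: L.eraseIdx (i : ℕ)) ~ L := by
      rw [← hget i]; exact perm_cons_eraseIdx L i (hilt i)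
    exact ((hperm1 i).trans h3.symm).cons_inv
  have hElen : ∀ i : Fin (k+1), (L.eraseIdx (i : ℕ)).length = k := by
    intro i
    rw [List.length_eraseIdx_of_lt (hilt i), hlen]
    omega
  -- rewrite the summand
  have hsummand : ∀ i : Fin (k+1), Adef (C i) (R i) =
      ((2⁻¹ * ((k.factorial : ℚ))⁻¹) •
        (C i * msum (L.eraseIdx (i : ℕ)) + msum (L.eraseIdx (i : ℕ)) * C i)) - symP L := by
    intro i
    rw [Adef, symP_congr (hperm1 i), symP_congr (hperm2 i), dia,
      symP_eq_msum (L.eraseIdx (i : ℕ)), hElen i]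
    rw [mul_smul_comm, smul_mul_assoc, ← smul_add, smul_smul]
  rw [Finset.sum_congr rfl (fun i _ => hsummand i), Finset.sum_sub_distrib,
    Finset.sum_const, ← Finset.smul_sum, Finset.sum_add_distrib]
  have hL1 : ∑ i : Fin (k+1), C i * msum (L.eraseIdx (i : ℕ)) = msum L := by
    rw [msum_left L hLne]
    refine (Finset.sum_equiv (finCongr hlen) (by simp) ?_).symm
    intro i _
    rw [← hget (finCongr hlen i)]
    rfl
  have hL2 : ∑ i : Fin (k+1), msum (L.eraseIdx (i : ℕ)) * C i = msum L := by
    rw [msum_right L hLne]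
    refine (Finset.sum_equiv (finCongr hlen) (by simp) ?_).symm
    intro i _
    rw [← hget (finCongr hlen i)]
    rfl
  rw [hL1, hL2, symP_eq_msum L, hlen]
  rw [Finset.card_univ, Fintype.card_fin]
  rw [← two_smul ℚ (msum L)]
  rw [smul_smul, ← Nat.cast_smul_eq_nsmul ℚ, smul_smul, ← sub_smul]
  convert zero_smul ℚ (msum L) using 2
  have h2 : ((k+1).factorial : ℚ) = (k+1) * k.factorial := by
    rw [Nat.factorial_succ]; push_cast; ring
  push_cast [h2]
  have hk : (k.factorial : ℚ) ≠ 0 := Nat.cast_ne_zero.mpr k.factorial_ne_zero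
  have hk1 : ((k : ℚ) + 1) ≠ 0 := by positivity
  field_simp
  ring
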